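/- Let f(x) = x·log(x). Suppose 0 < p ≤ 1/2, 0 < p̃ ≤ p/2, and |f(p) - f(p̃)| > ε for some ε ∈ (0, 1/e). Then p ≥ exp(W₋₁(-ε)), where W₋₁ is the non-principal real branch of the Lambert W function on (-1/e, 0). -/

import Mathlib

open Real Set

lemma mul_log_strictAntiOn :
    StrictAntiOn (fun x : ℝ => x * Real.log x) (Set.Icc 0 (Real.exp (-1))) := by
  apply strictAntiOn_of_deriv_neg (convex_Icc _ _)
  · exact Real.continuous_mul_log.continuousOn
  · intro x hx
    rw [interior_Icc] at hx
    rw [Real.deriv_mul_log (ne_of_gt hx.1)]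
    have := Real.log_lt_log hx.1 hx.2
    rw [Real.log_exp] at this
    linarith

/-- If `0 < p ≤ 1/2`, `0 < p̃ ≤ p/2` and `|f(p) - f(p̃)| > ε` for `f(x) = x log x`
and `ε ∈ (0, 1/e)`, then `p ≥ exp (W₋₁(-ε))`, where `W₋₁` is the non-principal real
branch of the Lambert W function (characterized by `w ≤ -1` and `w * exp w = -ε`). -/
theorem stmt_1 (p pt ε w : ℝ)
    (hp : 0 < p) (hp2 : p ≤ 1/2)
    (hpt : 0 < pt) (hpt2 : pt ≤ p/2)
    (hε : 0 < ε) (hε2 : ε < Real.exp (-1))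
    (hdev : ε < |p * Real.log p - pt * Real.log pt|)
    (hw : w ≤ -1) (hwe : w * Real.exp w = -ε) :
    Real.exp w ≤ p := by
  by_contra h
  push_neg at h
  have he1 : Real.exp (-1) ≤ 1 := by
    have := Real.exp_le_exp.mpr (show (-1:ℝ) ≤ 0 by norm_num)
    simpa using this
  have h14 : (1:ℝ)/4 ≤ Real.exp (-1) := by
    rw [Real.exp_neg]
    have h4 : Real.exp 1 < 4 := by
      have := Real.exp_one_lt_d9
      linarith
    have hi : Real.exp 1 * (Real.exp 1)⁻¹ = 1 := mul_inv_cancel₀ (ne_of_gt (Real.exp_pos 1))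
    nlinarith [Real.exp_pos 1]
  -- p/2 and pt are in [0, exp(-1)]
  have hpt_mem : pt ∈ Set.Icc (0:ℝ) (Real.exp (-1)) :=
    ⟨le_of_lt hpt, by linarith⟩
  have hp2_mem : p/2 ∈ Set.Icc (0:ℝ) (Real.exp (-1)) :=
    ⟨by linarith, by linarith⟩
  -- f(pt) ≥ f(p/2)
  have h1 : p/2 * Real.log (p/2) ≤ pt * Real.log pt :=
    (_root_.mul_log_strictAntiOn.antitoneOn hpt_mem hp2_mem hpt2)
  -- f(p/2) ≥ f(p)
  have hlog2p : Real.log p + Real.log 2 ≤ 0 := by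
    have : Real.log (2*p) ≤ 0 := Real.log_nonpos (by linarith) (by linarith)
    rwa [Real.log_mul (by norm_num) (ne_of_gt hp), add_comm] at this
  have h2 : p * Real.log p ≤ p/2 * Real.log (p/2) := by
    rw [show p/2 = p * (1/2) by ring, Real.log_mul (ne_of_gt hp) (by norm_num),
      Real.log_div (by norm_num) (by norm_num), Real.log_one]
    nlinarith
  have hfpt0 : pt * Real.log pt ≤ 0 :=
    mul_nonpos_of_nonneg_of_nonpos (le_of_lt hpt)
      (Real.log_nonpos (le_of_lt hpt) (by linarith))
  have habs : |p * Real.log p - pt * Real.log pt| = pt * Real.log pt - p * Real.log p := by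
    rw [abs_sub_comm, abs_of_nonneg (by linarith)]
  rw [habs] at hdev
  have hfp : p * Real.log p < -ε := by linarith
  -- f(exp w) = -ε and f is strictly decreasing, p < exp w
  have hew_mem : Real.exp w ∈ Set.Icc (0:ℝ) (Real.exp (-1)) :=
    ⟨le_of_lt (Real.exp_pos w), Real.exp_le_exp.mpr hw⟩
  have hp_mem : p ∈ Set.Icc (0:ℝ) (Real.exp (-1)) := by
    refine ⟨le_of_lt hp, ?_⟩
    have := Real.exp_le_exp.mpr hw
    linarith
  have h3 : Real.exp w * Real.log (Real.exp w) < p * Real.log p :=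
    _root_.mul_log_strictAntiOn hp_mem hew_mem h
  rw [Real.log_exp] at h3
  nlinarith
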